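/- Let l > 0, Ω := (−l/2, l/2), δ > 0, and let p, q ∈ (1, ∞) with q' defined by 1/q + 1/q' = 1. Consider the Laplace kernel k(x,y) := (δ/2) e^{−δ|x−y|} and, for u ∈ L^q(Ω), the function (𝒦u)(x) := ∫_Ω k(x,y) u(y) dy. Then for every x ∈ Ω the function 𝒦u is differentiable at x with derivative (𝒦u)'(x) = −(δ²/2) ∫_Ω sgn(x−y) e^{−δ|x−y|} u(y) dy, and this derivative satisfies ‖(𝒦u)'‖_p ≤ (δ²/2) l^{1/p + 1/q'} ‖u‖_q. In particular, 𝒦u belongs to the Sobolev space W^{1,p}(Ω). -/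

import Mathlib

open MeasureTheory Metric

lemma aux_exp_lip {δ : ℝ} (hδ : 0 < δ) {a b : ℝ} (ha : 0 ≤ a) (hb : 0 ≤ b) :
    |Real.exp (-δ * a) - Real.exp (-δ * b)| ≤ δ * |a - b| := by
  wlog h : b ≤ a generalizing a b
  · rw [abs_sub_comm, abs_sub_comm a b]; exact this hb ha (le_of_not_ge h)
  have h1 : Real.exp (-δ * a) ≤ Real.exp (-δ * b) := Real.exp_le_exp.2 (by nlinarith)
  rw [abs_of_nonpos (by linarith), abs_of_nonneg (by linarith)]
  have h3 : 1 - Real.exp (-(δ * (a - b))) ≤ δ * (a - b) := by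
    have := Real.add_one_le_exp (-(δ * (a - b))); linarith
  have h4 : Real.exp (-δ * a) = Real.exp (-δ * b) * Real.exp (-(δ*(a-b))) := by
    rw [← Real.exp_add]; ring_nf
  have h2 : Real.exp (-δ * b) ≤ 1 := Real.exp_le_one_iff.2 (by nlinarith)
  nlinarith [Real.exp_pos (-δ * b), Real.exp_pos (-(δ*(a-b)))]

lemma aux_sign_cast (t : ℝ) : ((SignType.sign t : SignType) : ℝ) = Real.sign t := by
  rcases lt_trichotomy t 0 with h | h | h
  · simp [Real.sign_of_neg h, sign_neg h]
  · simp [h, Real.sign_zero]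
  · simp [Real.sign_of_pos h, sign_pos h]

lemma aux_msign : Measurable Real.sign := by
  unfold Real.sign
  exact Measurable.ite (measurableSet_lt measurable_id measurable_const) measurable_const
    (Measurable.ite (measurableSet_lt measurable_const measurable_id) measurable_const
      measurable_const)

lemma aux_deriv {𝕂 : Type*} [RCLike 𝕂] {δ : ℝ} (hδ : 0 < δ) (s : Set ℝ) (hs : MeasurableSet s)
    (u : ℝ → 𝕂) (hu1 : Integrable u (volume.restrict s)) (x : ℝ) :
    HasDerivAt (fun x' => ∫ y in s, (δ / 2 * Real.exp (-δ * |x' - y|)) • u y)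
      (∫ y in s, (-(δ ^ 2 / 2) * Real.sign (x - y) * Real.exp (-δ * |x - y|)) • u y) x := by
  have hexp_le_one : ∀ t : ℝ, Real.exp (-δ * |t|) ≤ 1 := fun t =>
    Real.exp_le_one_iff.2 (by nlinarith [abs_nonneg t])
  have hF_meas : ∀ᶠ x' in nhds x,
      AEStronglyMeasurable (fun y => (δ / 2 * Real.exp (-δ * |x' - y|)) • u y)
        (volume.restrict s) := by
    refine Filter.Eventually.of_forall fun x' => ?_
    have hc : Continuous fun y : ℝ => δ / 2 * Real.exp (-δ * |x' - y|) := by continuity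
    exact hc.aestronglyMeasurable.smul hu1.1
  have hF_int : Integrable (fun y => (δ / 2 * Real.exp (-δ * |x - y|)) • u y)
      (volume.restrict s) := by
    refine Integrable.mono' (hu1.norm.const_mul (δ / 2)) hF_meas.self_of_nhds ?_
    refine Filter.Eventually.of_forall fun y => ?_
    rw [norm_smul]
    have : ‖δ / 2 * Real.exp (-δ * |x - y|)‖ ≤ δ / 2 := by
      rw [Real.norm_eq_abs, abs_of_nonneg (by positivity)]
      nlinarith [hexp_le_one (x - y), Real.exp_pos (-δ * |x - y|)]
    exact mul_le_mul_of_nonneg_right this (norm_nonneg _) |>.trans_eq rfl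
  have hF'_meas : AEStronglyMeasurable
      (fun y => (-(δ ^ 2 / 2) * Real.sign (x - y) * Real.exp (-δ * |x - y|)) • u y)
      (volume.restrict s) := by
    have m1 : Measurable fun y : ℝ => -(δ ^ 2 / 2) * Real.sign (x - y) *
        Real.exp (-δ * |x - y|) := by
      exact (((aux_msign.comp (measurable_id.const_sub x)).const_mul _).mul
        (by continuity : Continuous fun y : ℝ => Real.exp (-δ * |x - y|)).measurable)
    exact m1.aestronglyMeasurable.smul hu1.1
  have h_lip : ∀ᵐ y ∂(volume.restrict s),
      LipschitzOnWith (Real.nnabs (δ ^ 2 / 2 * ‖u y‖))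
        (fun x' => (δ / 2 * Real.exp (-δ * |x' - y|)) • u y) (ball x 1) := by
    refine Filter.Eventually.of_forall fun y => ?_
    have lw : LipschitzWith (Real.nnabs (δ ^ 2 / 2 * ‖u y‖))
        (fun x' : ℝ => (δ / 2 * Real.exp (-δ * |x' - y|)) • u y) := by
      apply LipschitzWith.of_dist_le_mul
      intro a b
      rw [dist_eq_norm, ← sub_smul, norm_smul, Real.dist_eq]
      have hcoe : (↑(Real.nnabs (δ ^ 2 / 2 * ‖u y‖)) : ℝ) = δ ^ 2 / 2 * ‖u y‖ := by
        rw [Real.coe_nnabs, abs_of_nonneg (by positivity)]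
      rw [hcoe]
      have key : ‖δ / 2 * Real.exp (-δ * |a - y|) - δ / 2 * Real.exp (-δ * |b - y|)‖
          ≤ δ ^ 2 / 2 * |a - b| := by
        rw [Real.norm_eq_abs, ← mul_sub, abs_mul, abs_of_nonneg (by positivity : (0:ℝ) ≤ δ / 2)]
        have h1 := aux_exp_lip hδ (abs_nonneg (a - y)) (abs_nonneg (b - y))
        have h2 : |(|a - y|) - (|b - y|)| ≤ |a - b| := by
          have := abs_abs_sub_abs_le_abs_sub (a - y) (b - y)
          simpa using this
        nlinarith [abs_nonneg ((|a - y|) - (|b - y|)), abs_nonneg (a - b)]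
      calc ‖δ / 2 * Real.exp (-δ * |a - y|) - δ / 2 * Real.exp (-δ * |b - y|)‖ * ‖u y‖
          ≤ (δ ^ 2 / 2 * |a - b|) * ‖u y‖ :=
            mul_le_mul_of_nonneg_right key (norm_nonneg _)
        _ = δ ^ 2 / 2 * ‖u y‖ * |a - b| := by ring
    exact lw.lipschitzOnWith
  have bound_int : Integrable (fun y => δ ^ 2 / 2 * ‖u y‖) (volume.restrict s) :=
    hu1.norm.const_mul _
  have hae : ∀ᵐ y ∂(volume.restrict s), y ≠ x := by
    refine ae_iff.2 ?_
    have h1 : {y : ℝ | ¬ y ≠ x} = {x} := by ext t; simp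
    rw [h1, Measure.restrict_apply' hs]
    exact measure_mono_null Set.inter_subset_left Real.volume_singleton
  have h_diff : ∀ᵐ y ∂(volume.restrict s),
      HasDerivAt (fun x' => (δ / 2 * Real.exp (-δ * |x' - y|)) • u y)
        ((-(δ ^ 2 / 2) * Real.sign (x - y) * Real.exp (-δ * |x - y|)) • u y) x := by
    filter_upwards [hae] with y hy
    have hne : x - y ≠ 0 := sub_ne_zero.2 (Ne.symm hy)
    have d1 : HasDerivAt (fun x' : ℝ => x' - y) 1 x := (hasDerivAt_id x).sub_const y
    have d2 : HasDerivAt (fun x' : ℝ => |x' - y|) ((SignType.sign (x - y) : ℝ) * 1) x :=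
      by have := (hasDerivAt_abs hne).comp x d1; exact this
    have d3 := d2.const_mul (-δ)
    have d4 := d3.exp
    have d5 := d4.const_mul (δ / 2)
    have d6 := d5.smul_const (u y)
    convert d6 using 1
    · rfl
    rw [← aux_sign_cast]
    ring
  exact (hasDerivAt_integral_of_dominated_loc_of_lip (ball_mem_nhds x one_pos) hF_meas hF_int hF'_meas h_lip
    bound_int h_diff).2

/-- smoothing property of the Laplace kernel on
`Ω = (−l/2, l/2)`: for `u ∈ L^q(Ω)` the function `𝒦u` is differentiable with
`(𝒦u)'(x) = −(δ²/2)∫_Ω sgn(x−y)e^{−δ|x−y|}u(y)dy`, the derivative satisfies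
`‖(𝒦u)'‖_p ≤ (δ²/2) l^{1/p+1/q'} ‖u‖_q`, and `𝒦u ∈ W^{1,p}(Ω)`
(both `𝒦u` and its derivative lie in `L^p(Ω)`). -/
theorem stmt_11 {𝕂 : Type*} [RCLike 𝕂] (l δ p q q' : ℝ) (hl : 0 < l) (hδ : 0 < δ)
    (hp : 1 < p) (hq : 1 < q) (hq' : 1 < q') (hconj : 1 / q + 1 / q' = 1)
    (u : ℝ → 𝕂)
    (hu : MemLp u (ENNReal.ofReal q) (volume.restrict (Set.Ioo (-(l / 2)) (l / 2)))) :
    (∀ x ∈ Set.Ioo (-(l / 2)) (l / 2),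
      HasDerivAt
        (fun x' => ∫ y in Set.Ioo (-(l / 2)) (l / 2),
          (δ / 2 * Real.exp (-δ * |x' - y|)) • u y)
        (∫ y in Set.Ioo (-(l / 2)) (l / 2),
          (-(δ ^ 2 / 2) * Real.sign (x - y) * Real.exp (-δ * |x - y|)) • u y) x) ∧
    (∫ x in Set.Ioo (-(l / 2)) (l / 2),
        ‖∫ y in Set.Ioo (-(l / 2)) (l / 2),
          (-(δ ^ 2 / 2) * Real.sign (x - y) * Real.exp (-δ * |x - y|)) • u y‖ ^ p) ^
        (1 / p) ≤
      δ ^ 2 / 2 * l ^ (1 / p + 1 / q') *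
        (∫ y in Set.Ioo (-(l / 2)) (l / 2), ‖u y‖ ^ q) ^ (1 / q) ∧
    MemLp (fun x => ∫ y in Set.Ioo (-(l / 2)) (l / 2),
        (δ / 2 * Real.exp (-δ * |x - y|)) • u y)
      (ENNReal.ofReal p) (volume.restrict (Set.Ioo (-(l / 2)) (l / 2))) ∧
    MemLp (fun x => ∫ y in Set.Ioo (-(l / 2)) (l / 2),
        (-(δ ^ 2 / 2) * Real.sign (x - y) * Real.exp (-δ * |x - y|)) • u y)
      (ENNReal.ofReal p) (volume.restrict (Set.Ioo (-(l / 2)) (l / 2))) := by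
  set Ω : Set ℝ := Set.Ioo (-(l / 2)) (l / 2) with hΩ
  set μ : Measure ℝ := volume.restrict Ω with hμdef
  have hq1 : (1 : ENNReal) ≤ ENNReal.ofReal q := by
    rw [ENNReal.one_le_ofReal]; linarith
  have hu1 : Integrable u μ := hu.integrable hq1
  set Ku : ℝ → 𝕂 := fun x => ∫ y in Ω, (δ / 2 * Real.exp (-δ * |x - y|)) • u y with hKu
  set g : ℝ → 𝕂 := fun x =>
    ∫ y in Ω, (-(δ ^ 2 / 2) * Real.sign (x - y) * Real.exp (-δ * |x - y|)) • u y with hgdef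
  have hd : ∀ x : ℝ, HasDerivAt Ku (g x) x := fun x =>
    aux_deriv hδ Ω measurableSet_Ioo u hu1 x
  -- volume of Ω
  have hμΩ : (volume Ω).toReal = l := by
    have h2 : l / 2 - -(l / 2) = l := by ring
    rw [hΩ, Real.volume_Ioo, h2, ENNReal.toReal_ofReal hl.le]
  -- basics about exp and sign
  have hexp_le_one : ∀ t : ℝ, Real.exp (-δ * |t|) ≤ 1 := fun t =>
    Real.exp_le_one_iff.2 (by nlinarith [abs_nonneg t])
  have hsign : ∀ t : ℝ, |Real.sign t| ≤ 1 := by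
    intro t
    rcases Real.sign_apply_eq t with h | h | h <;> rw [h] <;> norm_num
  -- pointwise bounds on the kernels
  have hscal1 : ∀ x y : ℝ, ‖(δ / 2 * Real.exp (-δ * |x - y|)) • u y‖ ≤ δ / 2 * ‖u y‖ := by
    intro x y
    rw [norm_smul, Real.norm_eq_abs, abs_of_nonneg (by positivity)]
    have h1 : δ / 2 * Real.exp (-δ * |x - y|) ≤ δ / 2 * 1 :=
      mul_le_mul_of_nonneg_left (hexp_le_one (x - y)) (by positivity)
    rw [mul_one] at h1
    exact mul_le_mul_of_nonneg_right h1 (norm_nonneg _)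
  have hscal2 : ∀ x y : ℝ,
      ‖(-(δ ^ 2 / 2) * Real.sign (x - y) * Real.exp (-δ * |x - y|)) • u y‖
        ≤ δ ^ 2 / 2 * ‖u y‖ := by
    intro x y
    rw [norm_smul, Real.norm_eq_abs]
    have h1 : |(-(δ ^ 2 / 2) * Real.sign (x - y) * Real.exp (-δ * |x - y|))| ≤ δ ^ 2 / 2 := by
      rw [abs_mul, abs_mul, abs_neg, abs_of_nonneg (by positivity : (0:ℝ) ≤ δ ^ 2 / 2)]
      have h2 := hsign (x - y)
      have h3 : |Real.exp (-δ * |x - y|)| ≤ 1 := by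
        rw [abs_of_pos (Real.exp_pos _)]; exact hexp_le_one _
      have hab : |Real.sign (x - y)| * |Real.exp (-δ * |x - y|)| ≤ 1 := by
        nlinarith [abs_nonneg (Real.sign (x - y)), abs_nonneg (Real.exp (-δ * |x - y|))]
      calc δ ^ 2 / 2 * |Real.sign (x - y)| * |Real.exp (-δ * |x - y|)|
          = δ ^ 2 / 2 * (|Real.sign (x - y)| * |Real.exp (-δ * |x - y|)|) := by ring
        _ ≤ δ ^ 2 / 2 * 1 := mul_le_mul_of_nonneg_left hab (by positivity)
        _ = δ ^ 2 / 2 := mul_one _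
    exact mul_le_mul_of_nonneg_right h1 (norm_nonneg _)
  have hInt : Integrable (fun y => ‖u y‖) μ := hu1.norm
  have hKub : ∀ x : ℝ, ‖Ku x‖ ≤ δ / 2 * ∫ y in Ω, ‖u y‖ := by
    intro x
    rw [← MeasureTheory.integral_const_mul]
    exact norm_integral_le_of_norm_le (hInt.const_mul _)
      (Filter.Eventually.of_forall fun y => hscal1 x y)
  have hgb : ∀ x : ℝ, ‖g x‖ ≤ δ ^ 2 / 2 * ∫ y in Ω, ‖u y‖ := by
    intro x
    rw [← MeasureTheory.integral_const_mul]
    exact norm_integral_le_of_norm_le (hInt.const_mul _)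
      (Filter.Eventually.of_forall fun y => hscal2 x y)
  -- measurability
  have hgderiv : g = deriv Ku := funext fun x => ((hd x).deriv).symm
  have hgmeas : AEStronglyMeasurable g μ := by
    rw [hgderiv]; exact (stronglyMeasurable_deriv Ku).aestronglyMeasurable
  have hKucont : Continuous Ku :=
    continuous_iff_continuousAt.2 fun x => (hd x).continuousAt
  -- Hölder
  have hconjE : Real.HolderConjugate q q' :=
    Real.holderConjugate_iff.2 ⟨hq, by simpa [one_div] using hconj⟩
  have hone : MemLp (fun _ : ℝ => (1 : 𝕂)) (ENNReal.ofReal q') μ := memLp_const 1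
  have hH := integral_mul_norm_le_Lp_mul_Lq hconjE hu hone
  simp only [hμdef, norm_one, mul_one, Real.one_rpow, MeasureTheory.integral_const, smul_eq_mul,
    measureReal_restrict_apply_univ, Measure.restrict_apply_univ, measureReal_def, hμΩ] at hH
  -- hH : ∫ y, ‖u y‖ ∂μ ≤ (∫ ‖u‖^q)^(1/q) * l^(1/q')
  set M : ℝ := (∫ y in Ω, ‖u y‖ ^ q) ^ (1 / q) with hM
  have hM0 : 0 ≤ M :=
    Real.rpow_nonneg (integral_nonneg fun y => Real.rpow_nonneg (norm_nonneg _) _) _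
  set B : ℝ := δ ^ 2 / 2 * M * l ^ (1 / q') with hB
  have hB0 : 0 ≤ B := by positivity
  have hgB : ∀ x : ℝ, ‖g x‖ ≤ B := by
    intro x
    refine (hgb x).trans ?_
    rw [hB]
    calc δ ^ 2 / 2 * ∫ y in Ω, ‖u y‖ ≤ δ ^ 2 / 2 * (M * l ^ (1 / q')) :=
          mul_le_mul_of_nonneg_left hH (by positivity)
      _ = δ ^ 2 / 2 * M * l ^ (1 / q') := by ring
  have hintp : ∫ x in Ω, ‖g x‖ ^ p ≤ l * B ^ p := by
    have h1 : ‖∫ x in Ω, ‖g x‖ ^ p‖ ≤ ∫ _x in Ω, B ^ p := by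
      refine norm_integral_le_of_norm_le (integrable_const _) ?_
      refine Filter.Eventually.of_forall fun x => ?_
      rw [Real.norm_eq_abs, abs_of_nonneg (Real.rpow_nonneg (norm_nonneg _) _)]
      exact Real.rpow_le_rpow (norm_nonneg _) (hgB x) (by positivity)
    have h2 : ∫ _x in Ω, B ^ p = l * B ^ p := by
      rw [MeasureTheory.integral_const, smul_eq_mul, measureReal_restrict_apply_univ, measureReal_def, hμΩ]
    calc ∫ x in Ω, ‖g x‖ ^ p ≤ ‖∫ x in Ω, ‖g x‖ ^ p‖ := le_abs_self _
      _ ≤ ∫ _x in Ω, B ^ p := h1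
      _ = l * B ^ p := h2
  refine ⟨fun x _ => hd x, ?_, ?_, ?_⟩
  · have hstep : (∫ x in Ω, ‖g x‖ ^ p) ^ (1 / p) ≤ (l * B ^ p) ^ (1 / p) :=
      Real.rpow_le_rpow
        (integral_nonneg fun x => Real.rpow_nonneg (norm_nonneg _) _) hintp (by positivity)
    refine hstep.trans_eq ?_
    have hp0 : p ≠ 0 := by positivity
    rw [Real.mul_rpow hl.le (Real.rpow_nonneg hB0 _), ← Real.rpow_mul hB0,
      mul_one_div_cancel hp0, Real.rpow_one, Real.rpow_add hl, hB]
    ring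
  · exact MemLp.of_bound hKucont.aestronglyMeasurable _
      (Filter.Eventually.of_forall hKub)
  · exact MemLp.of_bound hgmeas _ (Filter.Eventually.of_forall hgB)
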